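/- Let p, q ∈ ℂ with 0 < |p| < 1 and 0 < |q| < 1, and for r ∈ (0,1) let N(r) = #{ (n,m) ∈ ℕ² : n,m ≥ 1, |p|^n |q|^m ≥ r }. Then N(r) = ⌊ℓ_p(r)⌋⌊ℓ_q(r)⌋/2 + δ(r) where ℓ_s(r) = log r / log |s| and |δ(r)| ≤ 1 + ⌊ℓ_p(r)⌋ + ⌊ℓ_q(r)⌋. In particular lim_{r→0} N(r)·(log r)^{-2} = (2 log|p| log|q|)^{-1}. -/

import Mathlib

open Finset in
lemma auxCount (a b L : ℝ) (ha : 0 < a) (hb : 0 < b) (hL : 0 < L) :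
    ∃ F : Finset (ℕ × ℕ),
      (↑F = {nm : ℕ × ℕ | 1 ≤ nm.1 ∧ 1 ≤ nm.2 ∧ (nm.1 : ℝ) * a + (nm.2 : ℝ) * b ≤ L}) ∧
      2 * F.card ≤ ⌊L / a⌋₊ * ⌊L / b⌋₊ ∧
      ⌊L / a⌋₊ * ⌊L / b⌋₊ ≤ 2 * F.card + (2 * ⌊L / a⌋₊ + ⌊L / b⌋₊) := by
  classical
  set A := ⌊L / a⌋₊ with hAdef
  set B := ⌊L / b⌋₊ with hBdef
  have hA : (A : ℝ) ≤ L / a := Nat.floor_le (by positivity)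
  have hB : (B : ℝ) ≤ L / b := Nat.floor_le (by positivity)
  have hA' : (A : ℝ) * a ≤ L := by rwa [← le_div_iff₀ ha]
  have hB' : (B : ℝ) * b ≤ L := by rwa [← le_div_iff₀ hb]
  have hA1 : L < ((A : ℝ) + 1) * a := by
    have := Nat.lt_floor_add_one (L / a); rw [div_lt_iff₀ ha] at this; linarith
  have hB1 : L < ((B : ℝ) + 1) * b := by
    have := Nat.lt_floor_add_one (L / b); rw [div_lt_iff₀ hb] at this; linarith
  set box : Finset (ℕ × ℕ) := Finset.Icc 1 A ×ˢ Finset.Icc 1 B with hboxdef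
  have hboxmem : ∀ nm : ℕ × ℕ, nm ∈ box ↔ (1 ≤ nm.1 ∧ nm.1 ≤ A) ∧ 1 ≤ nm.2 ∧ nm.2 ≤ B := by
    intro nm; simp [hboxdef, Finset.mem_Icc]
  have hboxcard : box.card = A * B := by
    simp [hboxdef, Nat.card_Icc]
  set F : Finset (ℕ × ℕ) := box.filter (fun nm => (nm.1 : ℝ) * a + (nm.2 : ℝ) * b ≤ L) with hFdef
  have hbox_of : ∀ n m : ℕ, (n : ℝ) * a + (m : ℝ) * b ≤ L → n ≤ A ∧ m ≤ B := by
    intro n m h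
    have hna : (n : ℝ) * a ≤ L := by nlinarith [mul_nonneg (Nat.cast_nonneg m : (0:ℝ) ≤ m) hb.le]
    have hmb : (m : ℝ) * b ≤ L := by nlinarith [mul_nonneg (Nat.cast_nonneg n : (0:ℝ) ≤ n) ha.le]
    exact ⟨Nat.le_floor (by rwa [le_div_iff₀ ha]), Nat.le_floor (by rwa [le_div_iff₀ hb])⟩
  have hFmem : ∀ nm : ℕ × ℕ, nm ∈ F ↔
      (1 ≤ nm.1 ∧ 1 ≤ nm.2 ∧ (nm.1 : ℝ) * a + (nm.2 : ℝ) * b ≤ L) := by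
    intro nm
    rw [hFdef, Finset.mem_filter, hboxmem]
    constructor
    · rintro ⟨⟨⟨h1, _⟩, h2, _⟩, h3⟩; exact ⟨h1, h2, h3⟩
    · rintro ⟨h1, h2, h3⟩
      obtain ⟨hA2, hB2⟩ := hbox_of _ _ h3
      exact ⟨⟨⟨h1, hA2⟩, h2, hB2⟩, h3⟩
  -- the reflection
  set σ : ℕ × ℕ → ℕ × ℕ := fun nm => (A + 1 - nm.1, B + 1 - nm.2) with hσdef
  have hσbox : ∀ x ∈ box, σ x ∈ box := by
    intro x hx; rw [hboxmem] at hx ⊢; simp only [hσdef]; omega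
  have hσinj : ∀ s : Finset (ℕ × ℕ), s ⊆ box → Set.InjOn σ ↑s := by
    intro s hs x hx y hy hxy
    have hx' := (hboxmem x).1 (hs hx)
    have hy' := (hboxmem y).1 (hs hy)
    simp only [hσdef, Prod.mk.injEq] at hxy
    exact Prod.ext (by omega) (by omega)
  have hσcast : ∀ x : ℕ × ℕ, x ∈ box →
      ((σ x).1 : ℝ) * a + ((σ x).2 : ℝ) * b
        = ((A : ℝ) + 1) * a + ((B : ℝ) + 1) * b - ((x.1 : ℝ) * a + (x.2 : ℝ) * b) := by
    intro x hx
    have hx' := (hboxmem x).1 hx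
    have h1 : ((σ x).1 : ℝ) = (A : ℝ) + 1 - (x.1 : ℝ) := by
      simp only [hσdef]; push_cast [Nat.cast_sub (by omega : x.1 ≤ A + 1)]; ring
    have h2 : ((σ x).2 : ℝ) = (B : ℝ) + 1 - (x.2 : ℝ) := by
      simp only [hσdef]; push_cast [Nat.cast_sub (by omega : x.2 ≤ B + 1)]; ring
    rw [h1, h2]; ring
  -- upper bound
  have hub : 2 * F.card ≤ A * B := by
    have hdisj : Disjoint F (F.image σ) := by
      rw [Finset.disjoint_left]
      intro x hxF hximg
      obtain ⟨y, hyF, rfl⟩ := Finset.mem_image.1 hximg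
      have hyb : y ∈ box := Finset.filter_subset _ _ hyF
      have hycond : (y.1 : ℝ) * a + (y.2 : ℝ) * b ≤ L := (Finset.mem_filter.1 hyF).2
      have hxcond : ((σ y).1 : ℝ) * a + ((σ y).2 : ℝ) * b ≤ L := (Finset.mem_filter.1 hxF).2
      rw [hσcast y hyb] at hxcond
      linarith
    have himg : (F.image σ).card = F.card :=
      Finset.card_image_of_injOn (hσinj F (Finset.filter_subset _ _))
    have hsub : F ∪ F.image σ ⊆ box := by
      apply Finset.union_subset (Finset.filter_subset _ _)
      intro x hx
      obtain ⟨y, hyF, rfl⟩ := Finset.mem_image.1 hx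
      exact hσbox y (Finset.filter_subset _ _ hyF)
    calc 2 * F.card = F.card + (F.image σ).card := by omega
    _ = (F ∪ F.image σ).card := (Finset.card_union_of_disjoint hdisj).symm
    _ ≤ box.card := Finset.card_le_card hsub
    _ = A * B := hboxcard
  -- lower bound
  have hlb : A * B ≤ 2 * F.card + (2 * A + B) := by
    set C : Finset (ℕ × ℕ) := box.filter (fun nm => ¬ ((nm.1 : ℝ) * a + (nm.2 : ℝ) * b ≤ L))
      with hCdef
    have hCcard : F.card + C.card = A * B := by
      rw [hFdef, hCdef, Finset.card_filter_add_card_filter_not, hboxcard]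
    have hCsub : C ⊆ box := Finset.filter_subset _ _
    have himgC : (C.image σ).card = C.card := Finset.card_image_of_injOn (hσinj C hCsub)
    have himgCsub : C.image σ ⊆ box := by
      intro x hx; obtain ⟨y, hyC, rfl⟩ := Finset.mem_image.1 hx; exact hσbox y (hCsub hyC)
    -- the strip
    set T : Finset (ℕ × ℕ) := box.filter
      (fun nm => L < (nm.1 : ℝ) * a + (nm.2 : ℝ) * b ∧ (nm.1 : ℝ) * a + (nm.2 : ℝ) * b < L + a + b)
      with hTdef
    have hinterT : C ∩ C.image σ ⊆ T := by
      intro x hx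
      rw [Finset.mem_inter] at hx
      obtain ⟨hxC, hximg⟩ := hx
      obtain ⟨y, hyC, rfl⟩ := Finset.mem_image.1 hximg
      have hyb : y ∈ box := hCsub hyC
      have hycond : L < (y.1 : ℝ) * a + (y.2 : ℝ) * b := by
        have := (Finset.mem_filter.1 hyC).2; linarith [not_le.1 this]
      have hxcond : L < ((σ y).1 : ℝ) * a + ((σ y).2 : ℝ) * b := by
        have := (Finset.mem_filter.1 hxC).2; linarith [not_le.1 this]
      rw [hTdef, Finset.mem_filter]
      refine ⟨hCsub hxC, hxcond, ?_⟩
      rw [hσcast y hyb]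
      linarith
    have hTcard : T.card ≤ A * (⌊a / b⌋₊ + 2) := by
      have := Finset.card_le_card_of_injOn
        (f := fun nm : ℕ × ℕ => (nm.1, ((nm.2 : ℤ) - ⌈(L - (nm.1 : ℝ) * a) / b⌉).toNat))
        (s := T) (t := Finset.Icc 1 A ×ˢ Finset.range (⌊a / b⌋₊ + 2)) ?_ ?_
      · simpa [Finset.card_product, Nat.card_Icc] using this
      · intro x hx
        rw [Finset.mem_coe, hTdef, Finset.mem_filter] at hx
        obtain ⟨hxb, h1, h2⟩ := hx
        have hxb' := (hboxmem x).1 hxb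
        rw [Finset.mem_coe, Finset.mem_product, Finset.mem_Icc, Finset.mem_range]
        refine ⟨⟨hxb'.1.1, hxb'.1.2⟩, ?_⟩
        set k : ℤ := ⌈(L - (x.1 : ℝ) * a) / b⌉ with hk
        have hk1 : (k : ℝ) ≥ (L - (x.1 : ℝ) * a) / b := Int.le_ceil _
        have hk2 : k ≤ (x.2 : ℤ) := by
          rw [hk]
          apply Int.ceil_le.2
          push_cast
          rw [div_le_iff₀ hb]
          linarith
        have hkb : L - (x.1 : ℝ) * a ≤ (k : ℝ) * b := (div_le_iff₀ hb).1 hk1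
        have hup : ((x.2 : ℝ) - (k : ℝ)) * b < a + b := by nlinarith [hkb, h2]
        have hup2 : (x.2 : ℝ) - (k : ℝ) < a / b + 1 := by
          rw [show a / b + 1 = (a + b) / b by field_simp]
          rw [lt_div_iff₀ hb]; exact hup
        have habf : a / b < (⌊a / b⌋₊ : ℝ) + 1 := Nat.lt_floor_add_one _
        have hnn : (0 : ℤ) ≤ (x.2 : ℤ) - k := by omega
        have h6 : (((x.2 : ℤ) - k).toNat : ℤ) = (x.2 : ℤ) - k := Int.toNat_of_nonneg hnn
        have hcast : ((((x.2 : ℤ) - k).toNat : ℕ) : ℝ) = (x.2 : ℝ) - (k : ℝ) := by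
          exact_mod_cast congrArg (fun z : ℤ => (z : ℝ)) h6
        have : ((((x.2 : ℤ) - k).toNat : ℕ) : ℝ) < ((⌊a / b⌋₊ + 2 : ℕ) : ℝ) := by
          rw [hcast]; push_cast; linarith
        exact_mod_cast this
      · intro x hx y hy hxy
        simp only [Prod.mk.injEq] at hxy
        obtain ⟨h1, h2⟩ := hxy
        simp only [Finset.mem_coe, hTdef, Finset.mem_filter] at hx hy
        have hkx : (⌈(L - (x.1 : ℝ) * a) / b⌉ : ℤ) ≤ (x.2 : ℤ) := by
          apply Int.ceil_le.2; push_cast; rw [div_le_iff₀ hb]; linarith [hx.2.1]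
        have hky : (⌈(L - (y.1 : ℝ) * a) / b⌉ : ℤ) ≤ (y.2 : ℤ) := by
          apply Int.ceil_le.2; push_cast; rw [div_le_iff₀ hb]; linarith [hy.2.1]
        apply Prod.ext h1
        rw [h1] at h2 hkx
        omega
    have hTA : A * (⌊a / b⌋₊ + 2) ≤ B + 2 * A := by
      have h1 : ((A * ⌊a / b⌋₊ : ℕ) : ℝ) < (B : ℝ) + 1 := by
        push_cast
        calc (A : ℝ) * (⌊a / b⌋₊ : ℝ) ≤ (L / a) * (a / b) := by
              apply mul_le_mul hA (Nat.floor_le (by positivity)) (by positivity) (by positivity)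
        _ = L / b := by field_simp
        _ < B + 1 := by linarith [Nat.lt_floor_add_one (L / b)]
      have h2 : A * ⌊a / b⌋₊ < B + 1 := by exact_mod_cast h1
      have : A * (⌊a / b⌋₊ + 2) = A * ⌊a / b⌋₊ + 2 * A := by ring
      omega
    have hfinal : 2 * C.card ≤ A * B + (2 * A + B) := by
      have h1 : (C ∪ C.image σ).card + (C ∩ C.image σ).card = C.card + (C.image σ).card :=
        Finset.card_union_add_card_inter _ _
      have h2 : (C ∪ C.image σ).card ≤ box.card :=
        Finset.card_le_card (Finset.union_subset hCsub himgCsub)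
      have h3 : (C ∩ C.image σ).card ≤ T.card := Finset.card_le_card hinterT
      have h4 := hTcard.trans hTA
      rw [hboxcard] at h2
      omega
    omega
  exact ⟨F, Set.ext fun nm => by rw [Finset.mem_coe, hFmem]; rfl, hub, hlb⟩

/-- lattice point count `N(r) = #{(n,m) ∈ ℕ², n,m ≥ 1 : |p|ⁿ|q|ᵐ ≥ r}`
satisfies `N(r) = ⌊ℓ_p(r)⌋⌊ℓ_q(r)⌋/2 + δ(r)` with
`|δ(r)| ≤ 1 + ⌊ℓ_p(r)⌋ + ⌊ℓ_q(r)⌋`, and `N(r)(log r)⁻² → (2 log|p| log|q|)⁻¹` as `r → 0`. -/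
theorem stmt12 (p q : ℂ) (hp0 : 0 < ‖p‖) (hp1 : ‖p‖ < 1)
    (hq0 : 0 < ‖q‖) (hq1 : ‖q‖ < 1) :
    let N : ℝ → ℕ := fun r =>
      Set.ncard {nm : ℕ × ℕ | 1 ≤ nm.1 ∧ 1 ≤ nm.2 ∧
        r ≤ ‖p‖ ^ nm.1 * ‖q‖ ^ nm.2}
    let ellp : ℝ → ℝ := fun r => Real.log r / Real.log (‖p‖)
    let ellq : ℝ → ℝ := fun r => Real.log r / Real.log (‖q‖)
    (∀ r ∈ Set.Ioo (0 : ℝ) 1, ∃ d : ℝ,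
        (N r : ℝ) = (⌊ellp r⌋ : ℝ) * (⌊ellq r⌋ : ℝ) / 2 + d ∧
        |d| ≤ 1 + (⌊ellp r⌋ : ℝ) + (⌊ellq r⌋ : ℝ)) ∧
    Filter.Tendsto (fun r => (N r : ℝ) * ((Real.log r) ^ 2)⁻¹)
      (nhdsWithin 0 (Set.Ioo (0 : ℝ) 1))
      (nhds (1 / (2 * Real.log (‖p‖) * Real.log (‖q‖)))) := by
  intro N ellp ellq
  have hlp : Real.log (‖p‖) < 0 := Real.log_neg hp0 hp1
  have hlq : Real.log (‖q‖) < 0 := Real.log_neg hq0 hq1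
  set a : ℝ := -Real.log (‖p‖) with hadef
  set b : ℝ := -Real.log (‖q‖) with hbdef
  have ha : 0 < a := by rw [hadef]; linarith
  have hb : 0 < b := by rw [hbdef]; linarith
  have hfl : ∀ x : ℝ, 0 ≤ x → ((⌊x⌋ : ℤ) : ℝ) = ((⌊x⌋₊ : ℕ) : ℝ) := by
    intro x hx
    have h1 : ((⌊x⌋₊ : ℕ) : ℤ) = ⌊x⌋ := by
      rw [← Int.floor_toNat]
      exact Int.toNat_of_nonneg (Int.floor_nonneg.2 hx)
    exact_mod_cast (congrArg (fun z : ℤ => (z : ℝ)) h1).symm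
  have key : ∀ r ∈ Set.Ioo (0 : ℝ) 1,
      (N r : ℝ) * 2 ≤ ((⌊(-Real.log r) / a⌋₊ : ℕ) : ℝ) * ((⌊(-Real.log r) / b⌋₊ : ℕ) : ℝ) ∧
      ((⌊(-Real.log r) / a⌋₊ : ℕ) : ℝ) * ((⌊(-Real.log r) / b⌋₊ : ℕ) : ℝ)
        ≤ (N r : ℝ) * 2 + (2 * ((⌊(-Real.log r) / a⌋₊ : ℕ) : ℝ)
            + ((⌊(-Real.log r) / b⌋₊ : ℕ) : ℝ)) := by
    intro r hr
    have hr0 := hr.1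
    have hr1 := hr.2
    have hL : 0 < -Real.log r := by have := Real.log_neg hr0 hr1; linarith
    obtain ⟨F, hFset, hub, hlb⟩ := auxCount a b (-Real.log r) ha hb hL
    have hcond : ∀ nm : ℕ × ℕ, (r ≤ ‖p‖ ^ nm.1 * ‖q‖ ^ nm.2 ↔
        (nm.1 : ℝ) * a + (nm.2 : ℝ) * b ≤ -Real.log r) := by
      intro nm
      rw [← Real.log_le_log_iff hr0 (mul_pos (pow_pos hp0 _) (pow_pos hq0 _)),
        Real.log_mul (pow_pos hp0 _).ne' (pow_pos hq0 _).ne', Real.log_pow, Real.log_pow,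
        hadef, hbdef]
      constructor <;> intro h <;> linarith
    have hNcard : N r = F.card := by
      show Set.ncard _ = _
      have hs : {nm : ℕ × ℕ | 1 ≤ nm.1 ∧ 1 ≤ nm.2 ∧
          r ≤ ‖p‖ ^ nm.1 * ‖q‖ ^ nm.2} = (↑F : Set (ℕ × ℕ)) := by
        rw [hFset]
        ext nm
        simp only [Set.mem_setOf_eq, hcond nm]
      rw [hs, Set.ncard_coe_finset]
    have hub' : ((2 * F.card : ℕ) : ℝ) ≤ ((⌊(-Real.log r) / a⌋₊ * ⌊(-Real.log r) / b⌋₊ : ℕ) : ℝ) := by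
      exact_mod_cast hub
    have hlb' : ((⌊(-Real.log r) / a⌋₊ * ⌊(-Real.log r) / b⌋₊ : ℕ) : ℝ)
        ≤ ((2 * F.card + (2 * ⌊(-Real.log r) / a⌋₊ + ⌊(-Real.log r) / b⌋₊) : ℕ) : ℝ) := by
      exact_mod_cast hlb
    push_cast at hub' hlb'
    rw [hNcard]
    constructor <;> linarith
  constructor
  · -- part 1
    intro r hr
    have hr0 := hr.1
    have hr1 := hr.2
    have hL : 0 < -Real.log r := by have := Real.log_neg hr0 hr1; linarith
    obtain ⟨hk1, hk2⟩ := key r hr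
    have hep : ellp r = (-Real.log r) / a := by
      show Real.log r / Real.log (‖p‖) = _
      rw [hadef, neg_div_neg_eq]
    have heq : ellq r = (-Real.log r) / b := by
      show Real.log r / Real.log (‖q‖) = _
      rw [hbdef, neg_div_neg_eq]
    have hpA : ((⌊ellp r⌋ : ℤ) : ℝ) = ((⌊(-Real.log r) / a⌋₊ : ℕ) : ℝ) := by
      rw [hep]; exact hfl _ (div_nonneg hL.le ha.le)
    have hqB : ((⌊ellq r⌋ : ℤ) : ℝ) = ((⌊(-Real.log r) / b⌋₊ : ℕ) : ℝ) := by
      rw [heq]; exact hfl _ (div_nonneg hL.le hb.le)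
    set A : ℝ := ((⌊(-Real.log r) / a⌋₊ : ℕ) : ℝ) with hAdef
    set B : ℝ := ((⌊(-Real.log r) / b⌋₊ : ℕ) : ℝ) with hBdef
    have hA0 : 0 ≤ A := by rw [hAdef]; positivity
    have hB0 : 0 ≤ B := by rw [hBdef]; positivity
    refine ⟨(N r : ℝ) - A * B / 2, by rw [hpA, hqB]; ring, ?_⟩
    rw [hpA, hqB, abs_le]
    constructor <;> linarith
  · -- part 2
    have hloglim : Filter.Tendsto (fun r : ℝ => -Real.log r)
        (nhdsWithin 0 (Set.Ioo (0 : ℝ) 1)) Filter.atTop := by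
      have h1 : Filter.Tendsto Real.log (nhdsWithin 0 (Set.Ioo (0 : ℝ) 1)) Filter.atBot :=
        Real.tendsto_log_nhdsGT_zero.mono_left
          (nhdsWithin_mono 0 Set.Ioo_subset_Ioi_self)
      rw [← Filter.tendsto_neg_atBot_iff]
      simpa using h1
    set c : ℝ := (3 / a + 2 / b) / 2 with hcdef
    have htarget : 1 / (2 * Real.log (‖p‖) * Real.log (‖q‖))
        = 1 / (2 * a * b) := by rw [hadef, hbdef]; ring_nf
    rw [htarget]
    have hglim : Filter.Tendsto (fun r : ℝ => 1 / (2 * a * b) - c / (-Real.log r))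
        (nhdsWithin 0 (Set.Ioo (0 : ℝ) 1)) (nhds (1 / (2 * a * b))) := by
      have h0 : Filter.Tendsto (fun r : ℝ => c / (-Real.log r))
          (nhdsWithin 0 (Set.Ioo (0 : ℝ) 1)) (nhds 0) :=
        Filter.Tendsto.div_atTop tendsto_const_nhds hloglim
      simpa using tendsto_const_nhds.sub h0
    have hev : ∀ᶠ r in nhdsWithin 0 (Set.Ioo (0 : ℝ) 1),
        (1 / (2 * a * b) - c / (-Real.log r) ≤ (N r : ℝ) * ((Real.log r) ^ 2)⁻¹ ∧
         (N r : ℝ) * ((Real.log r) ^ 2)⁻¹ ≤ 1 / (2 * a * b)) := by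
      filter_upwards [eventually_mem_nhdsWithin,
        hloglim.eventually_ge_atTop (max a b)] with r hr hLge
      obtain ⟨hk1, hk2⟩ := key r hr
      set L : ℝ := -Real.log r with hLdef
      have hLa : a ≤ L := le_trans (le_max_left _ _) hLge
      have hLb : b ≤ L := le_trans (le_max_right _ _) hLge
      have hL : 0 < L := lt_of_lt_of_le ha hLa
      have hsq : (Real.log r) ^ 2 = L ^ 2 := by rw [hLdef]; ring
      set A : ℝ := ((⌊L / a⌋₊ : ℕ) : ℝ) with hAdef
      set B : ℝ := ((⌊L / b⌋₊ : ℕ) : ℝ) with hBdef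
      have hA0 : 0 ≤ A := by rw [hAdef]; positivity
      have hB0 : 0 ≤ B := by rw [hBdef]; positivity
      have hAle : A ≤ L / a := Nat.floor_le (div_nonneg hL.le ha.le)
      have hBle : B ≤ L / b := Nat.floor_le (div_nonneg hL.le hb.le)
      have hAge : L / a - 1 ≤ A := (Nat.sub_one_lt_floor _).le
      have hBge : L / b - 1 ≤ B := (Nat.sub_one_lt_floor _).le
      have hAnn : 0 ≤ L / a - 1 := by
        rw [sub_nonneg, le_div_iff₀ ha]; linarith
      have hBnn : 0 ≤ L / b - 1 := by
        rw [sub_nonneg, le_div_iff₀ hb]; linarith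
      have hL2 : (0 : ℝ) < L ^ 2 := pow_pos hL 2
      have hprod : (L / a - 1) * (L / b - 1) ≤ A * B :=
        mul_le_mul hAge hBge hBnn hA0
      have e1 : (L / a - 1) * (L / b - 1) = L ^ 2 / (a * b) - L / a - L / b + 1 := by
        field_simp; ring
      have e2 : (L / a) * (L / b) = L ^ 2 / (a * b) := by
        field_simp
      constructor
      · rw [hsq]
        have h2N : L ^ 2 / (a * b) - (3 * (L / a) + 2 * (L / b)) ≤ 2 * (N r : ℝ) := by
          linarith [hprod, hk2, hAle, hBle, e1]
        rw [← sub_nonneg]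
        have e3 : (N r : ℝ) * (L ^ 2)⁻¹ - (1 / (2 * a * b) - c / L)
            = (2 * (N r : ℝ) - (L ^ 2 / (a * b) - (3 * (L / a) + 2 * (L / b)))) / (2 * L ^ 2) := by
          rw [hcdef]
          field_simp
        rw [e3]
        apply div_nonneg (by linarith) (by linarith)
      · rw [hsq, ← sub_nonneg]
        have hAB : A * B ≤ (L / a) * (L / b) :=
          mul_le_mul hAle hBle hB0 (div_nonneg hL.le ha.le)
        have e4 : 1 / (2 * a * b) - (N r : ℝ) * (L ^ 2)⁻¹
            = (L ^ 2 / (a * b) - 2 * (N r : ℝ)) / (2 * L ^ 2) := by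
          field_simp
        rw [e4]
        apply div_nonneg (by linarith [hk1, hAB, e2]) (by linarith)
    exact tendsto_of_tendsto_of_tendsto_of_le_of_le' hglim tendsto_const_nhds
      (hev.mono fun r h => h.1) (hev.mono fun r h => h.2)
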